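/- Let A and B be skew shapes and fix k ≥ 1. Then rows_k(A) ⊴ rows_k(B) in the dominance order if and only if rects_{k,l}(A) ≤ rects_{k,l}(B) for all l ≥ 1. -/

import Mathlib

open Finset

/-- The weakly decreasing rearrangement of a finite sequence (list) of natural numbers,
i.e. the partition obtained by sorting its parts into weakly decreasing order. -/
def sortDesc (l : List ℕ) : List ℕ := l.mergeSort (fun a b => b ≤ a)

/-- The (extended) dominance order on partitions, represented as weakly decreasing lists
of natural numbers (parts beyond the length of the list are taken to be `0`):
`Dom a b` means `a ⊴ b`, i.e. `a₁ + ⋯ + a_k ≤ b₁ + ⋯ + b_k` for all `k`. -/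
def Dom (a b : List ℕ) : Prop := ∀ k : ℕ, (a.take k).sum ≤ (b.take k).sum

/-- The conjugate (transpose) of a partition given as a list of natural numbers:
the `j`-th entry (0-indexed) is the number of parts that are `> j`. -/
def conj (l : List ℕ) : List ℕ :=
  (List.range (l.foldr max 0)).map (fun j => (l.filter (fun x => j < x)).length)

/-- A skew shape `λ/μ`: a pair of Young diagrams `μ ⊆ λ`. -/
structure SkewShape where
  outer : YoungDiagram
  inner : YoungDiagram
  le : inner ≤ outer

namespace SkewShape

/-- The cells (boxes) of a skew shape: boxes of the outer diagram not in the inner one. -/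
def cells (A : SkewShape) : Finset (ℕ × ℕ) := A.outer.cells \ A.inner.cells

/-- The number of rows of (the outer shape of) a skew shape. -/
def numRows (A : SkewShape) : ℕ := A.outer.colLen 0

/-- The number of columns of (the outer shape of) a skew shape. -/
def numCols (A : SkewShape) : ℕ := A.outer.rowLen 0

/-- `A.overlap k i` is the number of columns occupied in common by the `k` consecutive
rows `i, i+1, …, i+k-1` of the skew shape `A` (rows indexed from 0). -/
def overlap (A : SkewShape) (k i : ℕ) : ℕ :=
  ((Finset.range A.numCols).filter (fun j => ∀ t, t < k → (i + t, j) ∈ A.cells)).card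

/-- `rows_k(A)`: the weakly decreasing rearrangement of the row-overlap numbers
`(overlap k 0, overlap k 1, …)`; zero parts are discarded (a partition is identified
with its zero-padded versions).  `A.rowsK 1` is the partition of row lengths of `A`. -/
def rowsK (A : SkewShape) (k : ℕ) : List ℕ :=
  sortDesc (((List.range (A.numRows + 1 - k)).map (A.overlap k)).filter (fun x => 0 < x))

/-- The transpose (conjugate) of a skew shape. -/
def transpose (A : SkewShape) : SkewShape :=
  ⟨A.outer.transpose, A.inner.transpose, YoungDiagram.transpose_mono A.le⟩

/-- `cols_l(A)`: the weakly decreasing rearrangement of the column-overlap numbers of `A`;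
`A.colsK 1` is the partition of column lengths of `A`. -/
def colsK (A : SkewShape) (l : ℕ) : List ℕ := A.transpose.rowsK l

/-- `rects k l A` is the number of `k × l` rectangular subdiagrams (contiguous `k × l`
blocks of boxes) contained inside the skew shape `A`, recorded by the position of
their top-left corner. -/
def rects (A : SkewShape) (k l : ℕ) : ℕ :=
  (((Finset.range A.numRows) ×ˢ (Finset.range A.numCols)).filter
    (fun p => ∀ t, t < k → ∀ u, u < l → (p.1 + t, p.2 + u) ∈ A.cells)).card

end SkewShape

/-- A semistandard Young tableau of skew shape `A`: a filling of the boxes of `A`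
with positive integers, weakly increasing along rows and strictly increasing down
columns (entries outside `A` are recorded as `0`). -/
structure SkewSsyt (A : SkewShape) where
  entry : ℕ → ℕ → ℕ
  pos : ∀ i j, (i, j) ∈ A.cells → 1 ≤ entry i j
  zeros : ∀ i j, (i, j) ∉ A.cells → entry i j = 0
  row_weak : ∀ i j1 j2, j1 ≤ j2 → (i, j1) ∈ A.cells → (i, j2) ∈ A.cells →
      entry i j1 ≤ entry i j2
  col_strict : ∀ i1 i2 j, i1 < i2 → (i1, j) ∈ A.cells → (i2, j) ∈ A.cells →
      entry i1 j < entry i2 j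

/-- The number of boxes of `T` filled with the entry `v`. -/
def contentCount {A : SkewShape} (T : SkewSsyt A) (v : ℕ) : ℕ :=
  (A.cells.filter (fun c => T.entry c.1 c.2 = v)).card

/-- `T` has content `ν` (a partition written as a list, 0-indexed: `ν.getD v 0` is the
`(v+1)`-st part): the number of entries equal to `v + 1` is the `(v+1)`-st part of `ν`. -/
def HasContent {A : SkewShape} (T : SkewSsyt A) (ν : List ℕ) : Prop :=
  ∀ v : ℕ, contentCount T (v + 1) = ν.getD v 0

/-- `readBefore c c'` : the box `c` comes strictly before the box `c'` in the reverse
reading order (rows top to bottom, each row read right to left). -/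
def readBefore (c c' : ℕ × ℕ) : Prop := c.1 < c'.1 ∨ (c.1 = c'.1 ∧ c'.2 < c.2)

instance (c c' : ℕ × ℕ) : Decidable (readBefore c c') := by
  unfold readBefore; infer_instance

/-- `T` is a Littlewood–Richardson filling: its reverse reading word is a lattice word,
i.e. at every box `c` carrying an entry `v + 2`, the number of occurrences of `v + 2`
read so far (weakly up to `c`) is at most the number of occurrences of `v + 1` read
strictly before `c`. -/
def IsLR {A : SkewShape} (T : SkewSsyt A) : Prop :=
  ∀ c ∈ A.cells, ∀ v : ℕ, T.entry c.1 c.2 = v + 2 →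
    (A.cells.filter (fun c' => T.entry c'.1 c'.2 = v + 2 ∧ (readBefore c' c ∨ c' = c))).card ≤
    (A.cells.filter (fun c' => T.entry c'.1 c'.2 = v + 1 ∧ readBefore c' c)).card

/-- The support of the skew Schur function `s_A`: by the Littlewood–Richardson rule,
the set of partitions `ν` (weakly decreasing lists) admitting an LR filling of `A`
of content `ν`, i.e. those `ν` with `s_ν` appearing with nonzero coefficient in `s_A`. -/
def SkewShape.support (A : SkewShape) : Set (List ℕ) :=
  { ν | ν.Pairwise (· ≥ ·) ∧ ∃ T : SkewSsyt A, IsLR T ∧ HasContent T ν }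

/-- The coefficient of the Schur function `s_ν` in the Schur expansion of `s_A`:
by the Littlewood–Richardson rule, the number of LR fillings of `A` of content `ν`. -/
noncomputable def lrCoeff (A : SkewShape) (ν : List ℕ) : ℕ :=
  Nat.card { T : SkewSsyt A // IsLR T ∧ HasContent T ν }

/-- `s_A − s_B` is Schur-positive: every coefficient in the Schur expansion of the
difference is nonnegative, i.e. (by the LR rule) each LR coefficient of `B` is at most
the corresponding one of `A`. -/
def SchurPositiveDiff (A B : SkewShape) : Prop :=
  ∀ ν : List ℕ, ν.Pairwise (· ≥ ·) → lrCoeff B ν ≤ lrCoeff A ν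

/-- The skew Schur function `s_A = Σ_T x^T`, as a formal power series in the variables
`x_0, x_1, x_2, …` (variable `x_v` recording entries equal to `v + 1`): the coefficient
of the monomial with exponents `d` is the number of SSYT of shape `A` and content `d`. -/
noncomputable def skewSchur (A : SkewShape) : MvPowerSeries ℕ ℤ :=
  fun d => (Nat.card { T : SkewSsyt A // ∀ v : ℕ, contentCount T (v + 1) = d v } : ℤ)

/-- The boxes remaining after deleting the top box of every non-empty column of `A`:
a box survives iff there is a box of `A` directly above it. -/
def trimCells (A : SkewShape) : Finset (ℕ × ℕ) :=
  A.cells.filter (fun c => 1 ≤ c.1 ∧ (c.1 - 1, c.2) ∈ A.cells)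

/-- The set of boxes of the skew shape `A ∗ B`, obtained by positioning `B` immediately
below and to the left of `A` so that `A` and `B` share no common row or column. -/
def starCells (A B : SkewShape) : Finset (ℕ × ℕ) :=
  A.cells.image (fun c => (c.1, c.2 + B.numCols)) ∪
    B.cells.image (fun c => (c.1 + A.numRows, c.2))

/-- The straight shape (partition) `μ`, viewed as the skew shape `μ/(0)`. -/
def ofYD (μ : YoungDiagram) : SkewShape := ⟨μ, ⊥, bot_le⟩

/-- The list of parts `(μ_k, μ_{k+1}, …, μ_l)` (1-indexed) of a partition `μ` given as a
Young diagram, parts beyond the length of `μ` being `0`. -/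
def tailParts (μ : YoungDiagram) (k l : ℕ) : List ℕ :=
  (List.range (l + 1 - k)).map (fun t => μ.rowLen (k - 1 + t))


/-- truncated sum `Σ max(aᵢ - t, 0)` -/
def gsum (t : ℕ) (l : List ℕ) : ℕ := (l.map (fun a => a - t)).sum

lemma gsum_perm {a b : List ℕ} (h : a.Perm b) (t : ℕ) : gsum t a = gsum t b :=
  List.Perm.sum_eq (h.map _)

lemma gsum_filter_pos (t : ℕ) (l : List ℕ) :
    gsum t (l.filter (fun x => 0 < x)) = gsum t l := by
  induction l with
  | nil => rfl
  | cons x l ih =>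
    by_cases hx : 0 < x
    · simp [gsum, List.filter_cons, hx] at ih ⊢; omega
    · have : x = 0 := by omega
      simp [gsum, List.filter_cons, hx, this] at ih ⊢; omega

lemma gsum_eq_zero {t : ℕ} {l : List ℕ} (h : ∀ x ∈ l, x ≤ t) : gsum t l = 0 := by
  induction l with
  | nil => rfl
  | cons x l ih =>
    simp only [gsum, List.map_cons, List.sum_cons]
    have h1 : x - t = 0 := by have := h x (by simp); omega
    have h2 := ih (fun y hy => h y (by simp [hy]))
    simp [gsum] at h2; omega

lemma take_sum_le_gsum (a : List ℕ) (t m : ℕ) :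
    (a.take m).sum ≤ gsum t a + m * t := by
  induction a generalizing m with
  | nil => simp
  | cons x a ih =>
    cases m with
    | zero => simp
    | succ m =>
      simp only [List.take_succ_cons, List.sum_cons, gsum, List.map_cons]
      have := ih m
      have : (a.take m).sum ≤ gsum t a + m * t := this
      simp [gsum] at this ⊢
      have hx : x ≤ (x - t) + t := by omega
      calc x + (a.take m).sum ≤ ((x - t) + t) + (gsum t a + m * t) := by
            exact Nat.add_le_add hx this
        _ = (x - t) + gsum t a + (m + 1) * t := by ring
      
lemma sorted_exists_eq (a : List ℕ) (ha : a.Pairwise (· ≥ ·)) (t : ℕ) :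
    ∃ m, gsum t a + m * t = (a.take m).sum := by
  induction a with
  | nil => exact ⟨0, by simp [gsum]⟩
  | cons x a ih =>
    rw [List.pairwise_cons] at ha
    by_cases hx : t < x
    · obtain ⟨m, hm⟩ := ih ha.2
      refine ⟨m + 1, ?_⟩
      simp only [gsum, List.map_cons, List.sum_cons, List.take_succ_cons] at hm ⊢
      have : x - t + t = x := by omega
      rw [Nat.succ_mul]
      generalize m * t = q at hm ⊢
      omega
    · refine ⟨0, ?_⟩
      have : ∀ y ∈ x :: a, y ≤ t := by
        intro y hy
        rcases List.mem_cons.1 hy with rfl | hy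
        · omega
        · exact le_trans (ha.1 y hy) (by omega)
      simp [gsum_eq_zero this]

lemma sorted_getD_le (b : List ℕ) (hb : b.Pairwise (· ≥ ·)) (m : ℕ) :
    gsum (b.getD m 0) b + m * (b.getD m 0) ≤ (b.take m).sum := by
  induction b generalizing m with
  | nil => simp [gsum]
  | cons x b ih =>
    rw [List.pairwise_cons] at hb
    cases m with
    | zero =>
      have : ∀ y ∈ x :: b, y ≤ x := by
        intro y hy
        rcases List.mem_cons.1 hy with rfl | hy
        · exact le_refl _
        · exact hb.1 y hy
      simp [gsum_eq_zero this]
    | succ m =>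
      have ht : (x :: b).getD (m + 1) 0 = b.getD m 0 := by simp
      rw [ht]
      set t := b.getD m 0 with htdef
      have htx : t ≤ x := by
        rcases Nat.lt_or_ge m b.length with h | h
        · have he : b.getD m 0 = b[m] := by
            simp [List.getD_eq_getElem?_getD, List.getElem?_eq_getElem h]
          rw [htdef, he]
          exact hb.1 _ (List.getElem_mem h)
        · have : b.getD m 0 = 0 := by
            simp [List.getD_eq_getElem?_getD, List.getElem?_eq_none h]
          omega
      have := ih hb.2 m
      simp only [gsum, List.map_cons, List.sum_cons, List.take_succ_cons] at this ⊢
      calc x - t + (b.map (fun a => a - t)).sum + (m + 1) * t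
          = (x - t + t) + ((b.map (fun a => a - t)).sum + m * t) := by ring
        _ ≤ x + (b.take m).sum := by
            have hxt : x - t + t = x := by omega
            rw [hxt]; exact Nat.add_le_add_left this x

lemma dom_iff_gsum (a b : List ℕ) (ha : a.Pairwise (· ≥ ·)) (hb : b.Pairwise (· ≥ ·)) :
    Dom a b ↔ ∀ t, gsum t a ≤ gsum t b := by
  constructor
  · intro hd t
    obtain ⟨m, hm⟩ := sorted_exists_eq a ha t
    have h1 : gsum t a + m * t ≤ (b.take m).sum := hm ▸ hd m
    have h2 := take_sum_le_gsum b t m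
    omega
  · intro hg m
    set t := b.getD m 0
    calc (a.take m).sum ≤ gsum t a + m * t := take_sum_le_gsum a t m
      _ ≤ gsum t b + m * t := Nat.add_le_add_right (hg t) _
      _ ≤ (b.take m).sum := sorted_getD_le b hb m


namespace SkewShape

lemma mem_cells_iff (A : SkewShape) (i j : ℕ) :
    (i, j) ∈ A.cells ↔ A.inner.rowLen i ≤ j ∧ j < A.outer.rowLen i := by
  simp only [cells, Finset.mem_sdiff, YoungDiagram.mem_cells,
    YoungDiagram.mem_iff_lt_rowLen]
  omega

lemma col_iff (A : SkewShape) {k : ℕ} (hk : 1 ≤ k) (i j : ℕ) :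
    (∀ t, t < k → (i + t, j) ∈ A.cells) ↔
      A.inner.rowLen i ≤ j ∧ j < A.outer.rowLen (i + k - 1) := by
  constructor
  · intro h
    have h0 := (A.mem_cells_iff i j).1 (by simpa using h 0 hk)
    have h1 := (A.mem_cells_iff (i + (k - 1)) j).1 (h (k - 1) (by omega))
    constructor
    · exact h0.1
    · have : i + (k - 1) = i + k - 1 := by omega
      rw [← this]; exact h1.2
  · rintro ⟨h1, h2⟩ t ht
    rw [A.mem_cells_iff]
    constructor
    · exact le_trans (A.inner.rowLen_anti i (i + t) (by omega)) h1
    · exact lt_of_lt_of_le h2 (A.outer.rowLen_anti (i + t) (i + k - 1) (by omega))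

lemma hi_le_numCols (A : SkewShape) (r : ℕ) : A.outer.rowLen r ≤ A.numCols :=
  A.outer.rowLen_anti 0 r (Nat.zero_le r)

lemma overlap_eq (A : SkewShape) {k : ℕ} (hk : 1 ≤ k) (i : ℕ) :
    A.overlap k i = A.outer.rowLen (i + k - 1) - A.inner.rowLen i := by
  unfold overlap
  have hC := A.hi_le_numCols (i + k - 1)
  have : (Finset.range A.numCols).filter (fun j => ∀ t, t < k → (i + t, j) ∈ A.cells)
      = Finset.Ico (A.inner.rowLen i) (A.outer.rowLen (i + k - 1)) := by
    ext j
    simp only [Finset.mem_filter, Finset.mem_range, Finset.mem_Ico, A.col_iff hk]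
    omega
  rw [this, Nat.card_Ico]

lemma overlap_zero (A : SkewShape) {k : ℕ} (hk : 1 ≤ k) {i : ℕ}
    (h : A.numRows ≤ i + k - 1) : A.overlap k i = 0 := by
  rw [A.overlap_eq hk]
  have : A.outer.rowLen (i + k - 1) = 0 := by
    by_contra hne
    have hpos : 0 < A.outer.rowLen (i + k - 1) := Nat.pos_of_ne_zero hne
    have : (i + k - 1, 0) ∈ A.outer := YoungDiagram.mem_iff_lt_rowLen.2 hpos
    have := YoungDiagram.mem_iff_lt_colLen.1 this
    exact absurd this (by unfold numRows at h; omega)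
  omega

lemma rect_iff (A : SkewShape) {k l : ℕ} (hk : 1 ≤ k) (hl : 1 ≤ l) (i j : ℕ) :
    (∀ t, t < k → ∀ u, u < l → (i + t, j + u) ∈ A.cells) ↔
      A.inner.rowLen i ≤ j ∧ j + l ≤ A.outer.rowLen (i + k - 1) := by
  constructor
  · intro h
    have h0 := (A.col_iff hk i (j + 0)).1 (fun t ht => h t ht 0 hl)
    have h1 := (A.col_iff hk i (j + (l - 1))).1 (fun t ht => h t ht (l - 1) (by omega))
    omega
  · rintro ⟨h1, h2⟩ t ht u hu
    have := (A.col_iff hk i (j + u)).2 ⟨by omega, by omega⟩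
    exact this t ht

lemma rects_eq_sum (A : SkewShape) {k l : ℕ} (hk : 1 ≤ k) (hl : 1 ≤ l) :
    A.rects k l = ∑ i ∈ Finset.range A.numRows, (A.overlap k i - (l - 1)) := by
  unfold rects
  rw [Finset.card_filter, Finset.sum_product]
  refine Finset.sum_congr rfl (fun i _ => ?_)
  rw [← Finset.card_filter]
  have hC := A.hi_le_numCols (i + k - 1)
  have : (Finset.range A.numCols).filter
        (fun j => ∀ t, t < k → ∀ u, u < l → (i + t, j + u) ∈ A.cells)
      = Finset.Ico (A.inner.rowLen i) (A.outer.rowLen (i + k - 1) + 1 - l) := by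
    ext j
    simp only [Finset.mem_filter, Finset.mem_range, Finset.mem_Ico, A.rect_iff hk hl]
    omega
  rw [this, Nat.card_Ico, A.overlap_eq hk]
  omega

end SkewShape

lemma list_range_map_sum (n : ℕ) (f : ℕ → ℕ) :
    ((List.range n).map f).sum = ∑ i ∈ Finset.range n, f i := by
  induction n with
  | zero => simp
  | succ n ih => rw [List.range_succ, Finset.sum_range_succ]; simp [ih]

lemma rowsK_sorted (A : SkewShape) (k : ℕ) : (A.rowsK k).Pairwise (· ≥ ·) := by
  unfold SkewShape.rowsK sortDesc
  have h := List.pairwise_mergeSort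
    (le := fun a b : ℕ => decide (b ≤ a))
    (fun a b c hab hbc => by simp only [decide_eq_true_eq] at *; omega)
    (fun a b => by simp only [Bool.or_eq_true, decide_eq_true_eq]; omega)
    (((List.range (A.numRows + 1 - k)).map (A.overlap k)).filter (fun x => 0 < x))
  exact h.imp (fun {a b} hab => by simpa using hab)

lemma rowsK_perm (A : SkewShape) (k : ℕ) :
    (A.rowsK k).Perm
      (((List.range (A.numRows + 1 - k)).map (A.overlap k)).filter (fun x => 0 < x)) :=
  List.mergeSort_perm _ _

lemma rects_eq_gsum (A : SkewShape) {k l : ℕ} (hk : 1 ≤ k) (hl : 1 ≤ l) :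
    A.rects k l = gsum (l - 1) (A.rowsK k) := by
  rw [gsum_perm (rowsK_perm A k), gsum_filter_pos, A.rects_eq_sum hk hl]
  unfold gsum
  rw [List.map_map, list_range_map_sum]
  have e1 : (∑ i ∈ Finset.range A.numRows, (A.overlap k i - (l - 1)))
      = ∑ i ∈ Finset.range (A.numRows + 1), (A.overlap k i - (l - 1)) := by
    refine Finset.sum_subset (Finset.range_subset_range.2 (by omega)) ?_
    intro i hi hni
    simp only [Finset.mem_range] at hi hni
    rw [A.overlap_zero hk (by omega)]
    omega
  have e2 : (∑ i ∈ Finset.range (A.numRows + 1 - k),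
        ((fun i => A.overlap k i - (l - 1)) i))
      = ∑ i ∈ Finset.range (A.numRows + 1), (A.overlap k i - (l - 1)) := by
    refine Finset.sum_subset (Finset.range_subset_range.2 (by omega)) ?_
    intro i hi hni
    simp only [Finset.mem_range] at hi hni
    rw [A.overlap_zero hk (by omega)]
    omega
  rw [e1, ← e2]
  rfl
/-- first part of Proposition `pro:3measures`.
Let `A` and `B` be skew shapes and fix `k ≥ 1`.  Then `rows_k(A) ⊴ rows_k(B)` in the
dominance order if and only if `rects_{k,l}(A) ≤ rects_{k,l}(B)` for all `l ≥ 1`. -/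


theorem rowsK_dom_iff_rects_le (A B : SkewShape) (k : ℕ) (hk : 1 ≤ k) :
    Dom (A.rowsK k) (B.rowsK k) ↔ ∀ l, 1 ≤ l → A.rects k l ≤ B.rects k l := by
  rw [dom_iff_gsum _ _ (rowsK_sorted A k) (rowsK_sorted B k)]
  constructor
  · intro h l hl
    rw [rects_eq_gsum A hk hl, rects_eq_gsum B hk hl]
    exact h _
  · intro h t
    have := h (t + 1) (by omega)
    rwa [rects_eq_gsum A hk (by omega), rects_eq_gsum B hk (by omega),
      Nat.add_sub_cancel] at this
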